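/- arXiv:2111.01635 — 2 statements merged into one kernel-verified Lean document; each statement's English description precedes it below -/
import Mathlib

section
/- Suppose the target training samples D_t = {Z_j^t}_{j=1}^m are i.i.d. from P_Z^t and the nonnegative loss ℓ(w,Z) is σ-sub-Gaussian under the distribution P_Z^t ⊗ P_W. Then for any learning algorithm P_{W|D_s,D_t}, the expected transfer generalization error satisfies |gen(P_{W|D_s,D_t},P_{D_s},P_{D_t})| ≤ sqrt( (2σ²/m) · I(W; D_t | D_s) ). -/
/-!
STATEMENT 3: If D_t is i.i.d. from P_Z^t and the loss ℓ(w,Z) is σ-sub-Gaussian under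
P_Z^t ⊗ P_W, then for any algorithm P_{W|D_s,D_t},
|gen| ≤ sqrt((2σ²/m) · I(W; D_t | D_s)).
-/

open scoped BigOperators
open Finset

noncomputable section

namespace TransferGibbs

def KL {α : Type*} [Fintype α] (p q : α → ℝ) : ℝ :=
  ∑ x, p x * Real.log (p x / q x)

def IsPMF {α : Type*} [Fintype α] (p : α → ℝ) : Prop := (∀ x, 0 ≤ p x) ∧ ∑ x, p x = 1

def empRisk {W Z : Type*} [Fintype Z] (ℓ : W → Z → ℝ) {k : ℕ} (d : Fin k → Z) (w : W) : ℝ :=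
  (∑ j, ℓ w (d j)) / k

def popRisk {W Z : Type*} [Fintype Z] (ℓ : W → Z → ℝ) {m : ℕ}
    (pT : (Fin m → Z) → ℝ) (w : W) : ℝ :=
  ∑ dt, pT dt * empRisk ℓ dt w

/-- i.i.d. law of the target data set: product of `m` copies of `pZ`. -/
def iid {Z : Type*} [Fintype Z] (m : ℕ) (pZ : Z → ℝ) (dt : Fin m → Z) : ℝ :=
  ∏ j, pZ (dt j)

def gen {W Z : Type*} [Fintype W] [Fintype Z] (ℓ : W → Z → ℝ) {n m : ℕ}
    (pS : (Fin n → Z) → ℝ) (pT : (Fin m → Z) → ℝ)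
    (P : (Fin n → Z) → (Fin m → Z) → W → ℝ) : ℝ :=
  ∑ ds, ∑ dt, ∑ w, pS ds * pT dt * P ds dt w * (popRisk ℓ pT w - empRisk ℓ dt w)

/-- Conditional mutual information I(W; D_t | D_s), for independent D_s ⟂ D_t. -/
def condMI {W Z : Type*} [Fintype W] [Fintype Z] {n m : ℕ}
    (pS : (Fin n → Z) → ℝ) (pT : (Fin m → Z) → ℝ)
    (P : (Fin n → Z) → (Fin m → Z) → W → ℝ) : ℝ :=
  ∑ ds, pS ds *
    KL (fun p : W × (Fin m → Z) => pT p.2 * P ds p.2 p.1)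
       (fun p : W × (Fin m → Z) => (∑ dt, pT dt * P ds dt p.1) * pT p.2)

/-- Marginal distribution of the output hypothesis `W`. -/
def margW {W Z : Type*} [Fintype W] [Fintype Z] {n m : ℕ}
    (pS : (Fin n → Z) → ℝ) (pT : (Fin m → Z) → ℝ)
    (P : (Fin n → Z) → (Fin m → Z) → W → ℝ) (w : W) : ℝ :=
  ∑ ds, ∑ dt, pS ds * pT dt * P ds dt w

/-- `ℓ(w, Z)` is `σ`-sub-Gaussian under `pZ ⊗ pW`:
`log E[e^{λ(ℓ(W,Z) − E ℓ(W,Z))}] ≤ σ²λ²/2` for all real `λ`. -/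
def SubGaussianLoss {W Z : Type*} [Fintype W] [Fintype Z]
    (ℓ : W → Z → ℝ) (pW : W → ℝ) (pZ : Z → ℝ) (σ : ℝ) : Prop :=
  ∀ lam : ℝ,
    Real.log (∑ w, ∑ z, pW w * pZ z *
        Real.exp (lam * (ℓ w z - ∑ w', ∑ z', pW w' * pZ z' * ℓ w' z'))) ≤
      σ ^ 2 * lam ^ 2 / 2

-- auxiliary sum lemmas
lemma sum_pi_prod {Z : Type*} [Fintype Z] {m : ℕ} (f : Fin m → Z → ℝ) :
    ∑ dt : Fin m → Z, ∏ j, f j (dt j) = ∏ j, ∑ z, f j z :=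
  (Fintype.prod_sum f).symm

lemma sum_comm3 {A B C : Type*} [Fintype A] [Fintype B] [Fintype C]
    (f : A → B → C → ℝ) :
    ∑ a, ∑ b, ∑ c, f a b c = ∑ c, ∑ a, ∑ b, f a b c := by
  rw [show (∑ a, ∑ b, ∑ c, f a b c) = ∑ a, ∑ c, ∑ b, f a b c from
    Finset.sum_congr rfl fun a _ => Finset.sum_comm]
  exact Finset.sum_comm

lemma sum_comm4 {A B C D : Type*} [Fintype A] [Fintype B] [Fintype C] [Fintype D]
    (f : A → B → C → D → ℝ) :
    ∑ a, ∑ b, ∑ c, ∑ d, f a b c d = ∑ c, ∑ d, ∑ a, ∑ b, f a b c d := by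
  rw [sum_comm3 (fun a b c => ∑ d, f a b c d)]
  exact Finset.sum_congr rfl fun c _ => sum_comm3 (fun a b d => f a b c d)

lemma sum_triple_prod {A B C : Type*} [Fintype A] [Fintype B] [Fintype C]
    (F : A → B → C → ℝ) :
    ∑ x : A × B × C, F x.1 x.2.1 x.2.2 = ∑ a, ∑ b, ∑ c, F a b c := by
  rw [Fintype.sum_prod_type]
  exact Finset.sum_congr rfl fun a _ => Fintype.sum_prod_type _

/-- Gibbs-type inequality: `∑ a - ∑ b ≤ ∑ a log (a/b)`. -/
lemma gibbs_aux {α : Type*} [Fintype α] (a b : α → ℝ)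
    (ha : ∀ x, 0 ≤ a x) (hb : ∀ x, 0 ≤ b x) (hab : ∀ x, b x = 0 → a x = 0) :
    (∑ x, a x) - (∑ x, b x) ≤ ∑ x, a x * Real.log (a x / b x) := by
  rw [← Finset.sum_sub_distrib]
  apply Finset.sum_le_sum
  intro x _
  rcases (ha x).eq_or_lt with h | h
  · simp only [← h, zero_sub, zero_mul]
    linarith [hb x]
  · have hbx : 0 < b x := by
      rcases (hb x).eq_or_lt with h' | h'
      · exact absurd (hab x h'.symm) (by linarith)
      · exact h'
    have hlog := Real.log_le_sub_one_of_pos (div_pos hbx h)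
    have hrec : Real.log (a x / b x) = - Real.log (b x / a x) := by
      rw [← Real.log_inv, inv_div]
    have h1 : 1 - b x / a x ≤ Real.log (a x / b x) := by
      rw [hrec]; linarith
    have h2 : a x * (1 - b x / a x) ≤ a x * Real.log (a x / b x) :=
      mul_le_mul_of_nonneg_left h1 h.le
    have h3 : a x * (1 - b x / a x) = a x - b x := by
      field_simp
    linarith

lemma kl_nonneg {α : Type*} [Fintype α] (a b : α → ℝ)
    (ha : ∀ x, 0 ≤ a x) (hb : ∀ x, 0 ≤ b x) (hab : ∀ x, b x = 0 → a x = 0)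
    (ha1 : ∑ x, a x = 1) (hb1 : ∑ x, b x = 1) : 0 ≤ KL a b := by
  have := gibbs_aux a b ha hb hab
  rw [ha1, hb1] at this
  simpa [KL] using this

/-- Donsker–Varadhan inequality, finite form. -/
lemma dv_aux {α : Type*} [Fintype α] (p q : α → ℝ) (g : α → ℝ)
    (hp0 : ∀ x, 0 ≤ p x) (hp1 : ∑ x, p x = 1)
    (hq0 : ∀ x, 0 ≤ q x) (hq1 : ∑ x, q x = 1)
    (hac : ∀ x, q x = 0 → p x = 0) :
    ∑ x, p x * g x ≤ KL p q + Real.log (∑ x, q x * Real.exp (g x)) := by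
  set Zl := ∑ x, q x * Real.exp (g x) with hZ
  have hZpos : 0 < Zl := by
    obtain ⟨x0, hx0⟩ : ∃ x, 0 < q x := by
      by_contra hcon
      push_neg at hcon
      have : ∑ x, q x = 0 :=
        Finset.sum_eq_zero fun x _ => le_antisymm (hcon x) (hq0 x)
      rw [this] at hq1; norm_num at hq1
    have h1 : 0 < q x0 * Real.exp (g x0) := mul_pos hx0 (Real.exp_pos (g x0))
    have h2 : q x0 * Real.exp (g x0) ≤ Zl :=
      Finset.single_le_sum
        (fun x _ => mul_nonneg (hq0 x) (Real.exp_pos (g x)).le) (Finset.mem_univ x0)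
    linarith
  set q' : α → ℝ := fun x => q x * Real.exp (g x) / Zl with hq'
  have hq'1 : ∑ x, q' x = 1 := by
    rw [hq', ← Finset.sum_div, ← hZ, div_self hZpos.ne']
  have hgibbs := gibbs_aux p q' hp0
    (fun x => div_nonneg (mul_nonneg (hq0 x) (Real.exp_pos _).le) hZpos.le)
    (fun x hx => by
      apply hac
      rcases div_eq_zero_iff.mp hx with h | h
      · rcases mul_eq_zero.mp h with h' | h'
        · exact h'
        · exact absurd h' (Real.exp_pos _).ne'
      · exact absurd h hZpos.ne')
  rw [hp1, hq'1, sub_self] at hgibbs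
  have hexp : ∑ x, p x * Real.log (p x / q' x)
      = KL p q - ∑ x, p x * g x + Real.log Zl := by
    rw [KL, ← Finset.sum_sub_distrib]
    rw [show Real.log Zl = ∑ x, p x * Real.log Zl by
      rw [← Finset.sum_mul, hp1, one_mul]]
    rw [← Finset.sum_add_distrib]
    apply Finset.sum_congr rfl
    intro x _
    rcases (hp0 x).eq_or_lt with h | h
    · simp [← h]
    · have hqx : 0 < q x := by
        rcases (hq0 x).eq_or_lt with h' | h'
        · exact absurd (hac x h'.symm) (by linarith)
        · exact h'
      have hlogq' : Real.log (q' x) = Real.log (q x) + g x - Real.log Zl := by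
        rw [hq']
        simp only
        rw [Real.log_div (mul_pos hqx (Real.exp_pos _)).ne' hZpos.ne',
          Real.log_mul hqx.ne' (Real.exp_pos _).ne', Real.log_exp]
      rw [Real.log_div h.ne' (by positivity : (0:ℝ) < q' x).ne',
        Real.log_div h.ne' hqx.ne', hlogq']
      ring
  rw [hexp] at hgibbs
  linarith

lemma quad_aux {c s d : ℝ} (hc : 0 ≤ c) (hs : 0 ≤ s)
    (h : ∀ lam : ℝ, lam * d ≤ c + s * lam ^ 2 / 2) : d ^ 2 ≤ 2 * s * c := by
  rcases hs.eq_or_lt with hs0 | hs0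
  · have hd : d = 0 := by
      by_contra hd
      have h1 := h ((c + 1) / d)
      rw [div_mul_cancel₀ _ hd, ← hs0] at h1
      simp at h1
      linarith
    rw [hd, ← hs0]
    norm_num
  · have h1 := h (d / s)
    have e1 : d / s * d = d ^ 2 / s := by
      field_simp
    have e2 : s * (d / s) ^ 2 / 2 = d ^ 2 / (2 * s) := by
      field_simp
    rw [e1, e2] at h1
    have e3 : d ^ 2 / s = 2 * (d ^ 2 / (2 * s)) := by
      field_simp
    rw [e3] at h1
    have h4 : d ^ 2 / (2 * s) ≤ c := by linarith
    calc d ^ 2 = d ^ 2 / (2 * s) * (2 * s) := by field_simp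
    _ ≤ c * (2 * s) := mul_le_mul_of_nonneg_right h4 (by positivity)
    _ = 2 * s * c := by ring


lemma iid_marg {Z : Type*} [Fintype Z] [DecidableEq Z] {m : ℕ} (pZ : Z → ℝ)
    (h1 : ∑ z, pZ z = 1) (j : Fin m) (z : Z) :
    ∑ dt : Fin m → Z, (if dt j = z then iid m pZ dt else 0) = pZ z := by
  have key : ∀ dt : Fin m → Z, (if dt j = z then iid m pZ dt else 0)
      = ∏ k, (fun (k : Fin m) (y : Z) =>
          if k = j then (if y = z then pZ y else 0) else pZ y) k (dt k) := by
    intro dt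
    by_cases h : dt j = z
    · rw [if_pos h, iid]
      apply Finset.prod_congr rfl
      intro k _
      by_cases hk : k = j
      · subst hk; simp [h]
      · simp [hk]
    · rw [if_neg h]
      symm
      apply Finset.prod_eq_zero (Finset.mem_univ j)
      simp [h]
  rw [Finset.sum_congr rfl (fun dt _ => key dt),
    sum_pi_prod (fun (k : Fin m) (y : Z) =>
      if k = j then (if y = z then pZ y else 0) else pZ y)]
  have : ∀ k : Fin m, (∑ y, (fun (k : Fin m) (y : Z) =>
      if k = j then (if y = z then pZ y else 0) else pZ y) k y)
      = if k = j then pZ z else 1 := by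
    intro k
    by_cases hk : k = j
    · simp only [hk, if_true, eq_self_iff_true]
      rw [Finset.sum_ite_eq' Finset.univ z pZ]
      simp
    · simp only [hk, if_false, h1, if_neg hk]
  rw [Finset.prod_congr rfl (fun k _ => this k), Finset.prod_ite_eq' Finset.univ j
    (fun _ => pZ z)]
  simp


section Main
variable {W Z : Type*} [Fintype W] [Fintype Z] [DecidableEq Z] {n m : ℕ}
variable (pS : (Fin n → Z) → ℝ) (pZ : Z → ℝ)
  (P : (Fin n → Z) → (Fin m → Z) → W → ℝ)

/-- joint distribution of `(W, Z_j)`. -/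
def jointWZ (j : Fin m) (w : W) (z : Z) : ℝ :=
  ∑ ds, ∑ dt, if dt j = z then pS ds * iid m pZ dt * P ds dt w else 0

/-- conditional marginal of `W` given `ds`. -/
def condW (ds : Fin n → Z) (w : W) : ℝ := ∑ dt, iid m pZ dt * P ds dt w

variable {pS pZ P}

/-- All PMF hypotheses bundled. -/
structure Good (pS : (Fin n → Z) → ℝ) (pZ : Z → ℝ)
    (P : (Fin n → Z) → (Fin m → Z) → W → ℝ) : Prop where
  pS0 : ∀ ds, 0 ≤ pS ds
  pS1 : ∑ ds, pS ds = 1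
  pZ0 : ∀ z, 0 ≤ pZ z
  pZ1 : ∑ z, pZ z = 1
  P0 : ∀ ds dt w, 0 ≤ P ds dt w
  P1 : ∀ ds dt, ∑ w, P ds dt w = 1

variable (H : Good pS pZ P)
include H

set_option linter.unusedSectionVars false

lemma iid_nonneg (dt : Fin m → Z) : 0 ≤ iid m pZ dt :=
  Finset.prod_nonneg fun j _ => H.pZ0 (dt j)

lemma iid_sum : ∑ dt : Fin m → Z, iid m pZ dt = 1 := by
  have h := sum_pi_prod (m := m) (fun _ y => pZ y)
  rw [H.pZ1] at h
  simpa [iid] using h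

lemma a_nonneg (ds : Fin n → Z) (dt : Fin m → Z) (w : W) :
    0 ≤ pS ds * iid m pZ dt * P ds dt w :=
  mul_nonneg (mul_nonneg (H.pS0 ds) (iid_nonneg H dt)) (H.P0 ds dt w)

lemma sum_w_a (ds : Fin n → Z) (dt : Fin m → Z) :
    ∑ w, pS ds * iid m pZ dt * P ds dt w = pS ds * iid m pZ dt := by
  rw [← Finset.mul_sum, H.P1, mul_one]

lemma suma_one : ∑ ds, ∑ dt, ∑ w, pS ds * iid m pZ dt * P ds dt w = 1 := by
  calc ∑ ds, ∑ dt, ∑ w, pS ds * iid m pZ dt * P ds dt w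
      = ∑ ds, ∑ dt, pS ds * iid m pZ dt :=
        Finset.sum_congr rfl fun ds _ => Finset.sum_congr rfl fun dt _ => sum_w_a H ds dt
    _ = ∑ ds, pS ds := by
        refine Finset.sum_congr rfl fun ds _ => ?_
        rw [← Finset.mul_sum, iid_sum H, mul_one]
    _ = 1 := H.pS1

lemma margW_nonneg (w : W) : 0 ≤ margW pS (iid m pZ) P w :=
  Finset.sum_nonneg fun ds _ => Finset.sum_nonneg fun dt _ => a_nonneg H ds dt w

lemma margW_sum_one : ∑ w, margW pS (iid m pZ) P w = 1 := by
  unfold margW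
  rw [Finset.sum_comm]
  rw [show (∑ ds, ∑ w, ∑ dt, pS ds * iid m pZ dt * P ds dt w)
      = ∑ ds, ∑ dt, ∑ w, pS ds * iid m pZ dt * P ds dt w from
    Finset.sum_congr rfl fun ds _ => Finset.sum_comm]
  exact suma_one H

lemma term_le_margW (ds : Fin n → Z) (dt : Fin m → Z) (w : W) :
    pS ds * iid m pZ dt * P ds dt w ≤ margW pS (iid m pZ) P w := by
  calc pS ds * iid m pZ dt * P ds dt w
      ≤ ∑ dt', pS ds * iid m pZ dt' * P ds dt' w :=
        Finset.single_le_sum (fun dt' _ => a_nonneg H ds dt' w) (Finset.mem_univ dt)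
    _ ≤ margW pS (iid m pZ) P w :=
        Finset.single_le_sum
          (f := fun ds' => ∑ dt', pS ds' * iid m pZ dt' * P ds' dt' w)
          (fun ds' _ => Finset.sum_nonneg fun dt' _ => a_nonneg H ds' dt' w)
          (Finset.mem_univ ds)

lemma term_le_condW (ds : Fin n → Z) (dt : Fin m → Z) (w : W) :
    iid m pZ dt * P ds dt w ≤ condW pZ P ds w :=
  Finset.single_le_sum
    (f := fun dt' => iid m pZ dt' * P ds dt' w)
    (fun dt' _ => mul_nonneg (iid_nonneg H dt') (H.P0 ds dt' w)) (Finset.mem_univ dt)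

lemma condW_nonneg (ds : Fin n → Z) (w : W) : 0 ≤ condW pZ P ds w :=
  Finset.sum_nonneg fun dt _ => mul_nonneg (iid_nonneg H dt) (H.P0 ds dt w)

lemma condW_sum (w : W) :
    ∑ ds, pS ds * condW pZ P ds w = margW pS (iid m pZ) P w := by
  unfold condW margW
  exact Finset.sum_congr rfl fun ds _ => by
    rw [Finset.mul_sum]
    exact Finset.sum_congr rfl fun dt _ => (mul_assoc _ _ _).symm

lemma jointWZ_nonneg (j : Fin m) (w : W) (z : Z) : 0 ≤ jointWZ pS pZ P j w z :=
  Finset.sum_nonneg fun ds _ => Finset.sum_nonneg fun dt _ => by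
    split
    · exact a_nonneg H ds dt w
    · exact le_refl 0

lemma jointWZ_sum_z (j : Fin m) (w : W) :
    ∑ z, jointWZ pS pZ P j w z = margW pS (iid m pZ) P w := by
  unfold jointWZ margW
  rw [Finset.sum_comm]
  refine Finset.sum_congr rfl fun ds _ => ?_
  rw [Finset.sum_comm]
  refine Finset.sum_congr rfl fun dt _ => ?_
  rw [Finset.sum_ite_eq Finset.univ (dt j) (fun _ => pS ds * iid m pZ dt * P ds dt w)]
  simp

lemma jointWZ_sum_w (j : Fin m) (z : Z) :
    ∑ w, jointWZ pS pZ P j w z = pZ z := by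
  unfold jointWZ
  rw [Finset.sum_comm]
  have step1 : ∀ ds, ∑ w, ∑ dt, (if dt j = z then pS ds * iid m pZ dt * P ds dt w else 0)
      = ∑ dt, (if dt j = z then pS ds * iid m pZ dt else 0) := by
    intro ds
    rw [Finset.sum_comm]
    refine Finset.sum_congr rfl fun dt _ => ?_
    by_cases h : dt j = z
    · simp only [h, if_true]
      rw [← Finset.mul_sum, H.P1, mul_one]
    · simp [h]
  rw [Finset.sum_congr rfl fun ds _ => step1 ds]
  have step2 : ∀ ds, ∑ dt, (if dt j = z then pS ds * iid m pZ dt else 0)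
      = pS ds * pZ z := by
    intro ds
    have e : ∀ dt : Fin m → Z, (if dt j = z then pS ds * iid m pZ dt else 0)
        = pS ds * (if dt j = z then iid m pZ dt else 0) := by
      intro dt; split <;> simp
    rw [Finset.sum_congr rfl fun dt _ => e dt, ← Finset.mul_sum,
      iid_marg pZ H.pZ1 j z]
  rw [Finset.sum_congr rfl fun ds _ => step2 ds, ← Finset.sum_mul, H.pS1, one_mul]

lemma jointWZ_le_margW (j : Fin m) (w : W) (z : Z) :
    jointWZ pS pZ P j w z ≤ margW pS (iid m pZ) P w := by
  rw [← jointWZ_sum_z H j w]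
  exact Finset.single_le_sum
    (f := fun z' => jointWZ pS pZ P j w z')
    (fun z' _ => jointWZ_nonneg H j w z') (Finset.mem_univ z)

lemma jointWZ_le_pZ (j : Fin m) (w : W) (z : Z) :
    jointWZ pS pZ P j w z ≤ pZ z := by
  rw [← jointWZ_sum_w H j z]
  exact Finset.single_le_sum
    (f := fun w' => jointWZ pS pZ P j w' z)
    (fun w' _ => jointWZ_nonneg H j w' z) (Finset.mem_univ w)

lemma term_le_jointWZ (j : Fin m) (ds : Fin n → Z) (dt : Fin m → Z) (w : W) :
    pS ds * iid m pZ dt * P ds dt w ≤ jointWZ pS pZ P j w (dt j) := by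
  have h1 : pS ds * iid m pZ dt * P ds dt w
      = (if dt j = dt j then pS ds * iid m pZ dt * P ds dt w else 0) := by simp
  have hnn : ∀ (ds' : Fin n → Z) (dt' : Fin m → Z),
      0 ≤ (if dt' j = dt j then pS ds' * iid m pZ dt' * P ds' dt' w else 0) := by
    intro ds' dt'; split
    · exact a_nonneg H ds' dt' w
    · exact le_refl 0
  calc pS ds * iid m pZ dt * P ds dt w
      = (if dt j = dt j then pS ds * iid m pZ dt * P ds dt w else 0) := h1
    _ ≤ ∑ dt', (if dt' j = dt j then pS ds * iid m pZ dt' * P ds dt' w else 0) :=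
        Finset.single_le_sum (fun dt' _ => hnn ds dt') (Finset.mem_univ dt)
    _ ≤ jointWZ pS pZ P j w (dt j) :=
        Finset.single_le_sum
          (f := fun ds' => ∑ dt', (if dt' j = dt j then pS ds' * iid m pZ dt' * P ds' dt' w else 0))
          (fun ds' _ => Finset.sum_nonneg fun dt' _ => hnn ds' dt')
          (Finset.mem_univ ds)

lemma sum_jointWZ_one (j : Fin m) :
    ∑ x : W × Z, jointWZ pS pZ P j x.1 x.2 = 1 := by
  rw [Fintype.sum_prod_type]
  rw [Finset.sum_congr rfl fun w _ => jointWZ_sum_z H j w]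
  exact margW_sum_one H

lemma sum_prodWZ_one :
    ∑ x : W × Z, margW pS (iid m pZ) P x.1 * pZ x.2 = 1 := by
  rw [Fintype.sum_prod_type]
  have : ∀ w, ∑ z, margW pS (iid m pZ) P w * pZ z = margW pS (iid m pZ) P w := by
    intro w; rw [← Finset.mul_sum, H.pZ1, mul_one]
  rw [Finset.sum_congr rfl fun w _ => this w]
  exact margW_sum_one H

lemma jointWZ_ac (j : Fin m) (w : W) (z : Z)
    (h : margW pS (iid m pZ) P w * pZ z = 0) : jointWZ pS pZ P j w z = 0 := by
  rcases mul_eq_zero.mp h with h' | h'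
  · exact le_antisymm (h' ▸ jointWZ_le_margW H j w z) (jointWZ_nonneg H j w z)
  · exact le_antisymm (h' ▸ jointWZ_le_pZ H j w z) (jointWZ_nonneg H j w z)

section Risk
variable (ℓ : W → Z → ℝ)

lemma popRisk_eq (hm : 0 < m) (w : W) :
    popRisk ℓ (iid m pZ) w = ∑ z, pZ z * ℓ w z := by
  unfold popRisk empRisk
  have step1 : ∀ dt : Fin m → Z, iid m pZ dt * ((∑ j, ℓ w (dt j)) / (m : ℝ))
      = (∑ j, iid m pZ dt * ℓ w (dt j)) / (m : ℝ) := by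
    intro dt
    rw [← mul_div_assoc, Finset.mul_sum]
  rw [Finset.sum_congr rfl fun dt _ => step1 dt, ← Finset.sum_div, Finset.sum_comm]
  have step2 : ∀ j : Fin m, ∑ dt, iid m pZ dt * ℓ w (dt j) = ∑ z, pZ z * ℓ w z := by
    intro j
    have e : ∀ dt : Fin m → Z, iid m pZ dt * ℓ w (dt j)
        = ∑ z, (if dt j = z then iid m pZ dt * ℓ w z else 0) := by
      intro dt
      rw [Finset.sum_ite_eq Finset.univ (dt j) (fun z => iid m pZ dt * ℓ w z)]
      simp
    rw [Finset.sum_congr rfl fun dt _ => e dt, Finset.sum_comm]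
    refine Finset.sum_congr rfl fun z _ => ?_
    have e2 : ∀ dt : Fin m → Z, (if dt j = z then iid m pZ dt * ℓ w z else 0)
        = (if dt j = z then iid m pZ dt else 0) * ℓ w z := by
      intro dt; split <;> simp
    rw [Finset.sum_congr rfl fun dt _ => e2 dt, ← Finset.sum_mul,
      iid_marg pZ H.pZ1 j z]
  rw [Finset.sum_congr rfl fun j _ => step2 j, Finset.sum_const, Finset.card_univ,
    Fintype.card_fin, nsmul_eq_mul, mul_div_cancel_left₀]
  exact Nat.cast_ne_zero.mpr hm.ne'

/-- overall mean of the loss under `margW ⊗ pZ`. -/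
def muG : ℝ := ∑ w, ∑ z, margW pS (iid m pZ) P w * pZ z * ℓ w z

/-- mean of the loss under the joint law of `(W, Z_j)`. -/
def Ebar (j : Fin m) : ℝ := ∑ w, ∑ z, jointWZ pS pZ P j w z * ℓ w z

omit H in
lemma muG_eq : muG (pS := pS) (pZ := pZ) (P := P) ℓ
    = ∑ w, margW pS (iid m pZ) P w * ∑ z, pZ z * ℓ w z := by
  unfold muG
  refine Finset.sum_congr rfl fun w _ => ?_
  rw [Finset.mul_sum]
  exact Finset.sum_congr rfl fun z _ => (mul_assoc _ _ _)

lemma gen_eq (hm : 0 < m) :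
    gen ℓ pS (iid m pZ) P
      = (∑ j, (muG (pS := pS) (pZ := pZ) (P := P) ℓ
          - Ebar (pS := pS) (pZ := pZ) (P := P) ℓ j)) / (m : ℝ) := by
  have hmr : (m : ℝ) ≠ 0 := Nat.cast_ne_zero.mpr hm.ne'
  have expand : ∀ ds dt w, pS ds * iid m pZ dt * P ds dt w *
        (popRisk ℓ (iid m pZ) w - empRisk ℓ dt w)
      = pS ds * iid m pZ dt * P ds dt w * (∑ z, pZ z * ℓ w z)
        - (∑ j, pS ds * iid m pZ dt * P ds dt w * ℓ w (dt j)) / (m : ℝ) := by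
    intro ds dt w
    rw [mul_sub, popRisk_eq H ℓ hm w]
    congr 1
    unfold empRisk
    rw [← mul_div_assoc, Finset.mul_sum]
  have partA : (∑ ds, ∑ dt, ∑ w, pS ds * iid m pZ dt * P ds dt w * (∑ z, pZ z * ℓ w z))
      = muG (pS := pS) (pZ := pZ) (P := P) ℓ := by
    rw [sum_comm3 (fun ds dt w => pS ds * iid m pZ dt * P ds dt w * (∑ z, pZ z * ℓ w z))]
    rw [muG_eq]
    refine Finset.sum_congr rfl fun w _ => ?_
    unfold margW
    rw [Finset.sum_mul]
    refine Finset.sum_congr rfl fun ds _ => ?_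
    rw [Finset.sum_mul]
  have partB : ∀ j : Fin m, (∑ ds, ∑ dt, ∑ w, pS ds * iid m pZ dt * P ds dt w * ℓ w (dt j))
      = Ebar (pS := pS) (pZ := pZ) (P := P) ℓ j := by
    intro j
    unfold Ebar jointWZ
    have rhs : ∑ w, ∑ z, (∑ ds, ∑ dt, if dt j = z then pS ds * iid m pZ dt * P ds dt w else 0) * ℓ w z
        = ∑ w, ∑ z, ∑ ds, ∑ dt, (if dt j = z then pS ds * iid m pZ dt * P ds dt w * ℓ w z else 0) := by
      refine Finset.sum_congr rfl fun w _ => Finset.sum_congr rfl fun z _ => ?_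
      rw [Finset.sum_mul]
      refine Finset.sum_congr rfl fun ds _ => ?_
      rw [Finset.sum_mul]
      refine Finset.sum_congr rfl fun dt _ => ?_
      rw [ite_mul, zero_mul]
    rw [rhs, sum_comm4 (fun w z ds dt => if dt j = z then pS ds * iid m pZ dt * P ds dt w * ℓ w z else 0)]
    refine Finset.sum_congr rfl fun ds _ => Finset.sum_congr rfl fun dt _ =>
      Finset.sum_congr rfl fun w _ => ?_
    rw [Finset.sum_ite_eq Finset.univ (dt j)
      (fun z => pS ds * iid m pZ dt * P ds dt w * ℓ w z)]
    simp
  have key : gen ℓ pS (iid m pZ) P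
      = muG (pS := pS) (pZ := pZ) (P := P) ℓ
        - (∑ j, Ebar (pS := pS) (pZ := pZ) (P := P) ℓ j) / (m : ℝ) := by
    unfold gen
    calc ∑ ds, ∑ dt, ∑ w, pS ds * iid m pZ dt * P ds dt w *
          (popRisk ℓ (iid m pZ) w - empRisk ℓ dt w)
        = ∑ ds, ∑ dt, ∑ w,
            (pS ds * iid m pZ dt * P ds dt w * (∑ z, pZ z * ℓ w z)
              - (∑ j, pS ds * iid m pZ dt * P ds dt w * ℓ w (dt j)) / (m : ℝ)) :=
          Finset.sum_congr rfl fun ds _ => Finset.sum_congr rfl fun dt _ =>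
            Finset.sum_congr rfl fun w _ => expand ds dt w
      _ = (∑ ds, ∑ dt, ∑ w, pS ds * iid m pZ dt * P ds dt w * (∑ z, pZ z * ℓ w z))
            - (∑ ds, ∑ dt, ∑ w, ∑ j, pS ds * iid m pZ dt * P ds dt w * ℓ w (dt j)) / (m : ℝ) := by
          simp only [Finset.sum_sub_distrib, ← Finset.sum_div]
      _ = muG (pS := pS) (pZ := pZ) (P := P) ℓ
            - (∑ j, Ebar (pS := pS) (pZ := pZ) (P := P) ℓ j) / (m : ℝ) := by
          rw [partA]
          congr 1
          rw [show (∑ ds, ∑ dt, ∑ w, ∑ j, pS ds * iid m pZ dt * P ds dt w * ℓ w (dt j))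
              = ∑ j, ∑ ds, ∑ dt, ∑ w, pS ds * iid m pZ dt * P ds dt w * ℓ w (dt j) from by
            rw [show (∑ ds, ∑ dt, ∑ w, ∑ j, pS ds * iid m pZ dt * P ds dt w * ℓ w (dt j))
                = ∑ ds, ∑ dt, ∑ j, ∑ w, pS ds * iid m pZ dt * P ds dt w * ℓ w (dt j) from
              Finset.sum_congr rfl fun ds _ => Finset.sum_congr rfl fun dt _ =>
                Finset.sum_comm]
            exact (sum_comm3 (fun ds dt j =>
              ∑ w, pS ds * iid m pZ dt * P ds dt w * ℓ w (dt j))).trans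
              (Finset.sum_congr rfl fun j _ => rfl)]
          exact congrArg (· / (m : ℝ)) (Finset.sum_congr rfl fun j _ => partB j)
  rw [key, Finset.sum_sub_distrib, Finset.sum_const, Finset.card_univ, Fintype.card_fin,
    nsmul_eq_mul, sub_div, mul_div_cancel_left₀ _ hmr]

def KLj (j : Fin m) : ℝ :=
  KL (fun x : W × Z => jointWZ pS pZ P j x.1 x.2)
     (fun x : W × Z => margW pS (iid m pZ) P x.1 * pZ x.2)

lemma KLj_nonneg (j : Fin m) : 0 ≤ KLj (pS := pS) (pZ := pZ) (P := P) j :=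
  kl_nonneg _ _ (fun x => jointWZ_nonneg H j x.1 x.2)
    (fun x => mul_nonneg (margW_nonneg H x.1) (H.pZ0 x.2))
    (fun x hx => jointWZ_ac H j x.1 x.2 hx)
    (sum_jointWZ_one H j) (sum_prodWZ_one H)

lemma delta_sq (σ : ℝ) (hsub : SubGaussianLoss ℓ (margW pS (iid m pZ) P) pZ σ)
    (j : Fin m) :
    (muG (pS := pS) (pZ := pZ) (P := P) ℓ - Ebar (pS := pS) (pZ := pZ) (P := P) ℓ j) ^ 2
      ≤ 2 * σ ^ 2 * KLj (pS := pS) (pZ := pZ) (P := P) j := by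
  apply quad_aux (KLj_nonneg H j) (sq_nonneg σ)
  intro lam
  have hdv := dv_aux (fun x : W × Z => jointWZ pS pZ P j x.1 x.2)
      (fun x : W × Z => margW pS (iid m pZ) P x.1 * pZ x.2)
      (fun x : W × Z => (-lam) * (ℓ x.1 x.2 - muG (pS := pS) (pZ := pZ) (P := P) ℓ))
      (fun x => jointWZ_nonneg H j x.1 x.2) (sum_jointWZ_one H j)
      (fun x => mul_nonneg (margW_nonneg H x.1) (H.pZ0 x.2)) (sum_prodWZ_one H)
      (fun x hx => jointWZ_ac H j x.1 x.2 hx)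
  have hsumJ : ∑ w, ∑ z, jointWZ pS pZ P j w z = 1 := by
    have h := sum_jointWZ_one H j
    rwa [Fintype.sum_prod_type] at h
  have hsum_pg : (∑ x : W × Z, jointWZ pS pZ P j x.1 x.2 *
        ((-lam) * (ℓ x.1 x.2 - muG (pS := pS) (pZ := pZ) (P := P) ℓ)))
      = lam * (muG (pS := pS) (pZ := pZ) (P := P) ℓ
          - Ebar (pS := pS) (pZ := pZ) (P := P) ℓ j) := by
    rw [Fintype.sum_prod_type]
    have e : ∀ w z, jointWZ pS pZ P j w z *
          ((-lam) * (ℓ w z - muG (pS := pS) (pZ := pZ) (P := P) ℓ))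
        = (-lam) * (jointWZ pS pZ P j w z * ℓ w z)
          + (lam * muG (pS := pS) (pZ := pZ) (P := P) ℓ) * jointWZ pS pZ P j w z := by
      intro w z; ring
    calc ∑ w, ∑ z, jointWZ pS pZ P j w z *
          ((-lam) * (ℓ w z - muG (pS := pS) (pZ := pZ) (P := P) ℓ))
        = ∑ w, ∑ z, ((-lam) * (jointWZ pS pZ P j w z * ℓ w z)
            + (lam * muG (pS := pS) (pZ := pZ) (P := P) ℓ) * jointWZ pS pZ P j w z) :=
          Finset.sum_congr rfl fun w _ => Finset.sum_congr rfl fun z _ => e w z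
      _ = (-lam) * (∑ w, ∑ z, jointWZ pS pZ P j w z * ℓ w z)
            + (lam * muG (pS := pS) (pZ := pZ) (P := P) ℓ)
              * (∑ w, ∑ z, jointWZ pS pZ P j w z) := by
          simp only [Finset.sum_add_distrib, ← Finset.mul_sum]
      _ = lam * (muG (pS := pS) (pZ := pZ) (P := P) ℓ
            - Ebar (pS := pS) (pZ := pZ) (P := P) ℓ j) := by
          rw [hsumJ]
          unfold Ebar
          ring
  have hZeq : (∑ x : W × Z, (margW pS (iid m pZ) P x.1 * pZ x.2) *
        Real.exp ((-lam) * (ℓ x.1 x.2 - muG (pS := pS) (pZ := pZ) (P := P) ℓ)))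
      = ∑ w, ∑ z, margW pS (iid m pZ) P w * pZ z *
          Real.exp ((-lam) * (ℓ w z
            - ∑ w', ∑ z', margW pS (iid m pZ) P w' * pZ z' * ℓ w' z')) := by
    rw [Fintype.sum_prod_type]
    rfl
  have hlog := hsub (-lam)
  rw [hsum_pg, hZeq] at hdv
  have hfin : Real.log (∑ w, ∑ z, margW pS (iid m pZ) P w * pZ z *
        Real.exp ((-lam) * (ℓ w z
          - ∑ w', ∑ z', margW pS (iid m pZ) P w' * pZ z' * ℓ w' z')))
      ≤ σ ^ 2 * lam ^ 2 / 2 := by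
    have : σ ^ 2 * (-lam) ^ 2 / 2 = σ ^ 2 * lam ^ 2 / 2 := by ring
    rw [← this]
    exact hlog
  calc lam * (muG (pS := pS) (pZ := pZ) (P := P) ℓ
        - Ebar (pS := pS) (pZ := pZ) (P := P) ℓ j)
      ≤ KLj (pS := pS) (pZ := pZ) (P := P) j
          + Real.log (∑ w, ∑ z, margW pS (iid m pZ) P w * pZ z *
            Real.exp ((-lam) * (ℓ w z
              - ∑ w', ∑ z', margW pS (iid m pZ) P w' * pZ z' * ℓ w' z'))) := hdv
    _ ≤ KLj (pS := pS) (pZ := pZ) (P := P) j + σ ^ 2 * lam ^ 2 / 2 := by linarith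

lemma condMI_eq :
    condMI pS (iid m pZ) P
      = ∑ ds, ∑ dt, ∑ w, pS ds * iid m pZ dt * P ds dt w *
          Real.log (P ds dt w / condW pZ P ds w) := by
  unfold condMI KL
  refine Finset.sum_congr rfl fun ds _ => ?_
  rw [Finset.mul_sum, Fintype.sum_prod_type, Finset.sum_comm]
  refine Finset.sum_congr rfl fun dt _ => Finset.sum_congr rfl fun w _ => ?_
  by_cases hT : iid m pZ dt = 0
  · simp [hT]
  · have hratio : iid m pZ dt * P ds dt w / ((∑ dt', iid m pZ dt' * P ds dt' w) * iid m pZ dt)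
        = P ds dt w / condW pZ P ds w := by
      rw [mul_comm (∑ dt', iid m pZ dt' * P ds dt' w) (iid m pZ dt),
        mul_div_mul_left _ _ hT]
      rfl
    rw [hratio]
    ring

omit H in
lemma KLj_eq (j : Fin m) :
    KLj (pS := pS) (pZ := pZ) (P := P) j
      = ∑ ds, ∑ dt, ∑ w, pS ds * iid m pZ dt * P ds dt w *
          Real.log (jointWZ pS pZ P j w (dt j)
            / (margW pS (iid m pZ) P w * pZ (dt j))) := by
  unfold KLj KL
  rw [Fintype.sum_prod_type]
  have step1 : ∀ w z, jointWZ pS pZ P j w z *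
        Real.log (jointWZ pS pZ P j w z / (margW pS (iid m pZ) P w * pZ z))
      = ∑ ds, ∑ dt, (if dt j = z then pS ds * iid m pZ dt * P ds dt w *
          Real.log (jointWZ pS pZ P j w z / (margW pS (iid m pZ) P w * pZ z)) else 0) := by
    intro w z
    conv_lhs => rw [jointWZ]
    rw [Finset.sum_mul]
    refine Finset.sum_congr rfl fun ds _ => ?_
    rw [Finset.sum_mul]
    refine Finset.sum_congr rfl fun dt _ => ?_
    rw [ite_mul, zero_mul, ← jointWZ]
  rw [Finset.sum_congr rfl fun w _ => Finset.sum_congr rfl fun z _ => step1 w z]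
  rw [sum_comm4 (fun w z ds dt => if dt j = z then pS ds * iid m pZ dt * P ds dt w *
    Real.log (jointWZ pS pZ P j w z / (margW pS (iid m pZ) P w * pZ z)) else 0)]
  refine Finset.sum_congr rfl fun ds _ => Finset.sum_congr rfl fun dt _ =>
    Finset.sum_congr rfl fun w _ => ?_
  rw [Finset.sum_ite_eq Finset.univ (dt j) (fun z => pS ds * iid m pZ dt * P ds dt w *
    Real.log (jointWZ pS pZ P j w z / (margW pS (iid m pZ) P w * pZ z)))]
  simp

lemma pos_chain (ds : Fin n → Z) (dt : Fin m → Z) (w : W)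
    (ha : 0 < pS ds * iid m pZ dt * P ds dt w) :
    0 < pS ds ∧ 0 < iid m pZ dt ∧ 0 < P ds dt w ∧ 0 < margW pS (iid m pZ) P w
      ∧ 0 < condW pZ P ds w ∧ (∀ j, 0 < jointWZ pS pZ P j w (dt j))
      ∧ (∀ j, 0 < pZ (dt j)) := by
  have h1 := mul_ne_zero_iff.mp ha.ne'
  have h2 := mul_ne_zero_iff.mp h1.1
  have hS : 0 < pS ds := (H.pS0 ds).lt_of_ne' h2.1
  have hT : 0 < iid m pZ dt := (iid_nonneg H dt).lt_of_ne' h2.2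
  have hPp : 0 < P ds dt w := (H.P0 ds dt w).lt_of_ne' h1.2
  have hW : 0 < margW pS (iid m pZ) P w := lt_of_lt_of_le ha (term_le_margW H ds dt w)
  have hC : 0 < condW pZ P ds w :=
    lt_of_lt_of_le (mul_pos hT hPp) (term_le_condW H ds dt w)
  have hJ : ∀ j, 0 < jointWZ pS pZ P j w (dt j) :=
    fun j => lt_of_lt_of_le ha (term_le_jointWZ H j ds dt w)
  have hz : ∀ j, 0 < pZ (dt j) := by
    intro j
    have hne : (∏ k, pZ (dt k)) ≠ 0 := hT.ne'
    exact (H.pZ0 (dt j)).lt_of_ne' (Finset.prod_ne_zero_iff.mp hne j (Finset.mem_univ j))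
  exact ⟨hS, hT, hPp, hW, hC, hJ, hz⟩

lemma sum_KLj_le (hm : 0 < m) :
    ∑ j, KLj (pS := pS) (pZ := pZ) (P := P) j ≤ condMI pS (iid m pZ) P := by
  -- notation-free plan: a = joint, b = auxiliary product measure
  have hb0 : ∀ (ds : Fin n → Z) (dt : Fin m → Z) (w : W),
      0 ≤ pS ds * iid m pZ dt * (condW pZ P ds w *
        ∏ j, jointWZ pS pZ P j w (dt j) / (margW pS (iid m pZ) P w * pZ (dt j))) := by
    intro ds dt w
    refine mul_nonneg (mul_nonneg (H.pS0 ds) (iid_nonneg H dt))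
      (mul_nonneg (condW_nonneg H ds w) (Finset.prod_nonneg fun j _ => ?_))
    exact div_nonneg (jointWZ_nonneg H j w (dt j))
      (mul_nonneg (margW_nonneg H w) (H.pZ0 (dt j)))
  have hab : ∀ (ds : Fin n → Z) (dt : Fin m → Z) (w : W),
      pS ds * iid m pZ dt * (condW pZ P ds w *
        ∏ j, jointWZ pS pZ P j w (dt j) / (margW pS (iid m pZ) P w * pZ (dt j))) = 0
      → pS ds * iid m pZ dt * P ds dt w = 0 := by
    intro ds dt w hb
    by_contra ha
    have hapos : 0 < pS ds * iid m pZ dt * P ds dt w :=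
      (a_nonneg H ds dt w).lt_of_ne' ha
    obtain ⟨hS, hT, hPp, hW, hC, hJ, hz⟩ := pos_chain H ds dt w hapos
    have : 0 < pS ds * iid m pZ dt * (condW pZ P ds w *
        ∏ j, jointWZ pS pZ P j w (dt j) / (margW pS (iid m pZ) P w * pZ (dt j))) := by
      refine mul_pos (mul_pos hS hT) (mul_pos hC (Finset.prod_pos fun j _ => ?_))
      exact div_pos (hJ j) (mul_pos hW (hz j))
    exact this.ne' hb
  -- the per-term log identity
  have claim : ∀ (ds : Fin n → Z) (dt : Fin m → Z) (w : W),
      pS ds * iid m pZ dt * P ds dt w * Real.log (P ds dt w / condW pZ P ds w)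
        - pS ds * iid m pZ dt * P ds dt w *
            (∑ j, Real.log (jointWZ pS pZ P j w (dt j)
              / (margW pS (iid m pZ) P w * pZ (dt j))))
      = pS ds * iid m pZ dt * P ds dt w *
          Real.log ((pS ds * iid m pZ dt * P ds dt w)
            / (pS ds * iid m pZ dt * (condW pZ P ds w *
              ∏ j, jointWZ pS pZ P j w (dt j)
                / (margW pS (iid m pZ) P w * pZ (dt j))))) := by
    intro ds dt w
    rcases (a_nonneg H ds dt w).eq_or_lt with ha | ha
    · rw [← ha]; simp
    · obtain ⟨hS, hT, hPp, hW, hC, hJ, hz⟩ := pos_chain H ds dt w ha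
      have hr : ∀ j : Fin m, jointWZ pS pZ P j w (dt j)
          / (margW pS (iid m pZ) P w * pZ (dt j)) ≠ 0 :=
        fun j => (div_pos (hJ j) (mul_pos hW (hz j))).ne'
      have hprod : 0 < ∏ j, jointWZ pS pZ P j w (dt j)
          / (margW pS (iid m pZ) P w * pZ (dt j)) :=
        Finset.prod_pos fun j _ => div_pos (hJ j) (mul_pos hW (hz j))
      have hratio : (pS ds * iid m pZ dt * P ds dt w)
            / (pS ds * iid m pZ dt * (condW pZ P ds w *
              ∏ j, jointWZ pS pZ P j w (dt j)
                / (margW pS (iid m pZ) P w * pZ (dt j))))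
          = P ds dt w / (condW pZ P ds w *
              ∏ j, jointWZ pS pZ P j w (dt j)
                / (margW pS (iid m pZ) P w * pZ (dt j))) :=
        mul_div_mul_left _ _ (mul_pos hS hT).ne'
      rw [hratio, Real.log_div hPp.ne' (mul_pos hC hprod).ne',
        Real.log_mul hC.ne' hprod.ne',
        Real.log_prod (fun j _ => hr j),
        Real.log_div hPp.ne' hC.ne']
      ring
  -- total mass of b is 1
  have hinner : ∀ w : W, (∑ dt, iid m pZ dt *
        ∏ j, jointWZ pS pZ P j w (dt j) / (margW pS (iid m pZ) P w * pZ (dt j)))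
      = (if margW pS (iid m pZ) P w = 0 then 0 else 1) := by
    intro w
    have e1 : ∀ dt : Fin m → Z, iid m pZ dt *
          ∏ j, jointWZ pS pZ P j w (dt j) / (margW pS (iid m pZ) P w * pZ (dt j))
        = ∏ j, (pZ (dt j) * (jointWZ pS pZ P j w (dt j)
            / (margW pS (iid m pZ) P w * pZ (dt j)))) := by
      intro dt
      rw [iid, ← Finset.prod_mul_distrib]
    rw [Finset.sum_congr rfl fun dt _ => e1 dt,
      sum_pi_prod (fun j z => pZ z * (jointWZ pS pZ P j w z
        / (margW pS (iid m pZ) P w * pZ z)))]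
    have e2 : ∀ j : Fin m, (∑ z, pZ z * (jointWZ pS pZ P j w z
          / (margW pS (iid m pZ) P w * pZ z)))
        = margW pS (iid m pZ) P w / margW pS (iid m pZ) P w := by
      intro j
      have e3 : ∀ z, pZ z * (jointWZ pS pZ P j w z / (margW pS (iid m pZ) P w * pZ z))
          = jointWZ pS pZ P j w z / margW pS (iid m pZ) P w := by
        intro z
        by_cases hz : pZ z = 0
        · have hJ0 : jointWZ pS pZ P j w z = 0 :=
            le_antisymm (hz ▸ jointWZ_le_pZ H j w z) (jointWZ_nonneg H j w z)
          simp [hz, hJ0]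
        · rw [mul_comm (margW pS (iid m pZ) P w) (pZ z), ← mul_div_assoc,
            mul_div_mul_left _ _ hz]
      rw [Finset.sum_congr rfl fun z _ => e3 z, ← Finset.sum_div,
        jointWZ_sum_z H j w]
    rw [Finset.prod_congr rfl fun j _ => e2 j]
    by_cases hw : margW pS (iid m pZ) P w = 0
    · rw [if_pos hw, hw, div_zero, Finset.prod_const, Finset.card_univ,
        Fintype.card_fin, zero_pow hm.ne']
    · rw [if_neg hw, div_self hw, Finset.prod_const, one_pow]
  have hsum_b : (∑ ds, ∑ dt, ∑ w, pS ds * iid m pZ dt * (condW pZ P ds w *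
        ∏ j, jointWZ pS pZ P j w (dt j) / (margW pS (iid m pZ) P w * pZ (dt j))))
      = 1 := by
    rw [sum_comm3 (fun ds dt w => pS ds * iid m pZ dt * (condW pZ P ds w *
      ∏ j, jointWZ pS pZ P j w (dt j) / (margW pS (iid m pZ) P w * pZ (dt j))))]
    have e4 : ∀ w : W, (∑ ds, ∑ dt, pS ds * iid m pZ dt * (condW pZ P ds w *
          ∏ j, jointWZ pS pZ P j w (dt j) / (margW pS (iid m pZ) P w * pZ (dt j))))
        = margW pS (iid m pZ) P w * (if margW pS (iid m pZ) P w = 0 then 0 else 1) := by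
      intro w
      have e5 : ∀ ds, (∑ dt, pS ds * iid m pZ dt * (condW pZ P ds w *
            ∏ j, jointWZ pS pZ P j w (dt j) / (margW pS (iid m pZ) P w * pZ (dt j))))
          = (pS ds * condW pZ P ds w) * (∑ dt, iid m pZ dt *
              ∏ j, jointWZ pS pZ P j w (dt j)
                / (margW pS (iid m pZ) P w * pZ (dt j))) := by
        intro ds
        rw [Finset.mul_sum]
        exact Finset.sum_congr rfl fun dt _ => by ring
      rw [Finset.sum_congr rfl fun ds _ => e5 ds, ← Finset.sum_mul, condW_sum H w,
        hinner w]
    rw [Finset.sum_congr rfl fun w _ => e4 w]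
    have e6 : ∀ w : W, margW pS (iid m pZ) P w *
        (if margW pS (iid m pZ) P w = 0 then 0 else 1) = margW pS (iid m pZ) P w := by
      intro w
      by_cases hw : margW pS (iid m pZ) P w = 0
      · rw [if_pos hw, hw, zero_mul]
      · rw [if_neg hw, mul_one]
    rw [Finset.sum_congr rfl fun w _ => e6 w]
    exact margW_sum_one H
  -- apply Gibbs over the product type
  have hgibbs := gibbs_aux
    (a := fun x : (Fin n → Z) × (Fin m → Z) × W =>
      pS x.1 * iid m pZ x.2.1 * P x.1 x.2.1 x.2.2)
    (b := fun x : (Fin n → Z) × (Fin m → Z) × W =>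
      pS x.1 * iid m pZ x.2.1 * (condW pZ P x.1 x.2.2 *
        ∏ j, jointWZ pS pZ P j x.2.2 (x.2.1 j)
          / (margW pS (iid m pZ) P x.2.2 * pZ (x.2.1 j))))
    (fun x => a_nonneg H x.1 x.2.1 x.2.2)
    (fun x => hb0 x.1 x.2.1 x.2.2)
    (fun x => hab x.1 x.2.1 x.2.2)
  rw [sum_triple_prod (fun ds dt w => pS ds * iid m pZ dt * P ds dt w),
    sum_triple_prod (fun ds dt w => pS ds * iid m pZ dt * (condW pZ P ds w *
      ∏ j, jointWZ pS pZ P j w (dt j) / (margW pS (iid m pZ) P w * pZ (dt j)))),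
    sum_triple_prod (fun ds dt w => pS ds * iid m pZ dt * P ds dt w *
      Real.log ((pS ds * iid m pZ dt * P ds dt w)
        / (pS ds * iid m pZ dt * (condW pZ P ds w *
          ∏ j, jointWZ pS pZ P j w (dt j)
            / (margW pS (iid m pZ) P w * pZ (dt j)))))),
    suma_one H, hsum_b, sub_self] at hgibbs
  -- identify the Gibbs sum with condMI - ∑ KLj
  have hswap : ∑ j, KLj (pS := pS) (pZ := pZ) (P := P) j
      = ∑ ds, ∑ dt, ∑ w, pS ds * iid m pZ dt * P ds dt w *
          (∑ j, Real.log (jointWZ pS pZ P j w (dt j)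
            / (margW pS (iid m pZ) P w * pZ (dt j)))) := by
    rw [Finset.sum_congr rfl fun j (_ : j ∈ Finset.univ) => KLj_eq (pS := pS) j]
    rw [Finset.sum_comm]
    refine Finset.sum_congr rfl fun ds _ => ?_
    rw [Finset.sum_comm]
    refine Finset.sum_congr rfl fun dt _ => ?_
    rw [Finset.sum_comm]
    refine Finset.sum_congr rfl fun w _ => ?_
    rw [← Finset.mul_sum]
  have hfinal : condMI pS (iid m pZ) P - ∑ j, KLj (pS := pS) (pZ := pZ) (P := P) j
      = ∑ ds, ∑ dt, ∑ w, pS ds * iid m pZ dt * P ds dt w *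
          Real.log ((pS ds * iid m pZ dt * P ds dt w)
            / (pS ds * iid m pZ dt * (condW pZ P ds w *
              ∏ j, jointWZ pS pZ P j w (dt j)
                / (margW pS (iid m pZ) P w * pZ (dt j))))) := by
    rw [condMI_eq H, hswap]
    rw [← Finset.sum_sub_distrib]
    refine Finset.sum_congr rfl fun ds _ => ?_
    rw [← Finset.sum_sub_distrib]
    refine Finset.sum_congr rfl fun dt _ => ?_
    rw [← Finset.sum_sub_distrib]
    exact Finset.sum_congr rfl fun w _ => claim ds dt w
  linarith [hfinal ▸ hgibbs]

end Risk
end Main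

set_option maxHeartbeats 1000000 in
theorem gen_upper_bound_subGaussian
    {W Z : Type*} [Fintype W] [Fintype Z] {n m : ℕ} (hm : 0 < m)
    (ℓ : W → Z → ℝ) (hℓ : ∀ w z, 0 ≤ ℓ w z)
    (pS : (Fin n → Z) → ℝ) (hpS : IsPMF pS)
    (pZ : Z → ℝ) (hpZ : IsPMF pZ)
    (P : (Fin n → Z) → (Fin m → Z) → W → ℝ) (hP : ∀ ds dt, IsPMF (P ds dt))
    (σ : ℝ)
    (hsub : SubGaussianLoss ℓ (margW pS (iid m pZ) P) pZ σ) :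
    |gen ℓ pS (iid m pZ) P| ≤
      Real.sqrt (2 * σ ^ 2 / m * condMI pS (iid m pZ) P) := by
  classical
  have H : Good pS pZ P :=
    ⟨hpS.1, hpS.2, hpZ.1, hpZ.2, fun ds dt => (hP ds dt).1, fun ds dt => (hP ds dt).2⟩
  have hmr : (0 : ℝ) < (m : ℝ) := Nat.cast_pos.mpr hm
  -- abbreviations
  set D : Fin m → ℝ := fun j =>
    muG (pS := pS) (pZ := pZ) (P := P) ℓ - Ebar (pS := pS) (pZ := pZ) (P := P) ℓ j with hD
  set K : Fin m → ℝ := fun j => KLj (pS := pS) (pZ := pZ) (P := P) j with hK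
  have hK0 : ∀ j, 0 ≤ K j := fun j => KLj_nonneg H j
  have hKsum : ∑ j, K j ≤ condMI pS (iid m pZ) P := sum_KLj_le H hm
  have hDj : ∀ j, |D j| ≤ Real.sqrt (2 * σ ^ 2 * K j) := by
    intro j
    rw [← Real.sqrt_sq_eq_abs]
    exact Real.sqrt_le_sqrt (delta_sq H ℓ σ hsub j)
  have hgen : gen ℓ pS (iid m pZ) P = (∑ j, D j) / (m : ℝ) := gen_eq H ℓ hm
  have step1 : |gen ℓ pS (iid m pZ) P| ≤ (∑ j, Real.sqrt (2 * σ ^ 2 * K j)) / (m : ℝ) := by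
    rw [hgen, abs_div, abs_of_pos hmr]
    rw [div_le_div_iff_of_pos_right hmr]
    calc |∑ j, D j| ≤ ∑ j, |D j| := Finset.abs_sum_le_sum_abs _ _
      _ ≤ ∑ j, Real.sqrt (2 * σ ^ 2 * K j) := Finset.sum_le_sum fun j _ => hDj j
  have step2 : (∑ j, Real.sqrt (2 * σ ^ 2 * K j))
      ≤ Real.sqrt ((m : ℝ) * ∑ j, 2 * σ ^ 2 * K j) := by
    apply Real.le_sqrt_of_sq_le
    calc (∑ j, Real.sqrt (2 * σ ^ 2 * K j)) ^ 2
        ≤ (Finset.univ.card : ℝ) * ∑ j, (Real.sqrt (2 * σ ^ 2 * K j)) ^ 2 := by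
          exact sq_sum_le_card_mul_sum_sq
      _ = (m : ℝ) * ∑ j, 2 * σ ^ 2 * K j := by
          rw [Finset.card_univ, Fintype.card_fin]
          congr 1
          exact Finset.sum_congr rfl fun j _ =>
            Real.sq_sqrt (mul_nonneg (by positivity) (hK0 j))
  have hTnn : 0 ≤ ∑ j, 2 * σ ^ 2 * K j :=
    Finset.sum_nonneg fun j _ => mul_nonneg (by positivity) (hK0 j)
  have step3 : Real.sqrt ((m : ℝ) * ∑ j, 2 * σ ^ 2 * K j) / (m : ℝ)
      = Real.sqrt ((∑ j, 2 * σ ^ 2 * K j) / (m : ℝ)) := by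
    rw [Real.sqrt_mul hmr.le, Real.sqrt_div hTnn,
      div_eq_div_iff hmr.ne' (Real.sqrt_pos.mpr hmr).ne']
    rw [show Real.sqrt (m : ℝ) * Real.sqrt (∑ j, 2 * σ ^ 2 * K j) * Real.sqrt (m : ℝ)
        = Real.sqrt (∑ j, 2 * σ ^ 2 * K j) * (Real.sqrt (m : ℝ) * Real.sqrt (m : ℝ)) from by
      ring, Real.mul_self_sqrt hmr.le]
  have step4 : (∑ j, 2 * σ ^ 2 * K j) / (m : ℝ)
      ≤ 2 * σ ^ 2 / (m : ℝ) * condMI pS (iid m pZ) P := by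
    rw [← Finset.mul_sum,
      show (2 * σ ^ 2 * ∑ j, K j) / (m : ℝ) = 2 * σ ^ 2 / (m : ℝ) * (∑ j, K j) from by
        ring]
    exact mul_le_mul_of_nonneg_left hKsum (by positivity)
  calc |gen ℓ pS (iid m pZ) P|
      ≤ (∑ j, Real.sqrt (2 * σ ^ 2 * K j)) / (m : ℝ) := step1
    _ ≤ Real.sqrt ((m : ℝ) * ∑ j, 2 * σ ^ 2 * K j) / (m : ℝ) :=
        (div_le_div_iff_of_pos_right hmr).mpr step2
    _ = Real.sqrt ((∑ j, 2 * σ ^ 2 * K j) / (m : ℝ)) := step3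
    _ ≤ Real.sqrt (2 * σ ^ 2 / m * condMI pS (iid m pZ) P) := Real.sqrt_le_sqrt step4

end TransferGibbs
end
end

section
/- The expected transfer generalization error of the α-weighted Gibbs algorithm equals gen_α(P_{D_s},P_{D_t}) = D_SKL( P^γ_{W_α|D_s,D_t} ‖ P^{γ,L_α}_{W_α|D_s} | P_{D_s} P_{D_t} ) / (γα), where P^{γ,L_α}_{W_α|D_s} is the (γ, π(w_α), L_α(w_α,d_s,P_{D_t}))-Gibbs algorithm with energy L_α(w_α,d_s,P_{D_t}) = α L_P(w_α,P_{D_t}) + (1−α) L_E(w_α,d_s), and D_SKL(·‖·|·) denotes the conditional symmetrized KL divergence averaged over P_{D_s} ⊗ P_{D_t}. -/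
/-!
STATEMENT 9: gen_α(P_{D_s},P_{D_t}) = D_SKL(P^γ_{W_α|D_s,D_t} ‖ P^{γ,L_α}_{W_α|D_s} | P_{D_s}P_{D_t})/(γα),
where P^{γ,L_α}_{W_α|D_s} is the (γ, π, αL_P(w,P_{D_t}) + (1−α)L_E(w,d_s))-Gibbs algorithm.
-/

open scoped BigOperators
open Finset

noncomputable section

namespace TransferGibbs

def SKL {α : Type*} [Fintype α] (p q : α → ℝ) : ℝ := KL p q + KL q p

def gibbs {W : Type*} [Fintype W] (π : W → ℝ) (γ : ℝ) (f : W → ℝ) (w : W) : ℝ :=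
  π w * Real.exp (-γ * f w) / ∑ w', π w' * Real.exp (-γ * f w')

def wEmpRisk {W Z : Type*} [Fintype Z] (ℓ : W → Z → ℝ) (α : ℝ) {n m : ℕ}
    (ds : Fin n → Z) (dt : Fin m → Z) (w : W) : ℝ :=
  (1 - α) * empRisk ℓ ds w + α * empRisk ℓ dt w

/-- The mixed risk `L_α(w, d_s, P_{D_t}) = α L_P(w,P_{D_t}) + (1−α) L_E(w,d_s)`. -/
def mixRisk {W Z : Type*} [Fintype Z] (ℓ : W → Z → ℝ) (α : ℝ) {n m : ℕ}
    (ds : Fin n → Z) (pT : (Fin m → Z) → ℝ) (w : W) : ℝ :=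
  α * popRisk ℓ pT w + (1 - α) * empRisk ℓ ds w

/-- Conditional symmetrized KL divergence between two algorithms, averaged over
`P_{D_s} ⊗ P_{D_t}`. -/
def condSKLdiv {W Z : Type*} [Fintype W] [Fintype Z] {n m : ℕ}
    (pS : (Fin n → Z) → ℝ) (pT : (Fin m → Z) → ℝ)
    (P P' : (Fin n → Z) → (Fin m → Z) → W → ℝ) : ℝ :=
  ∑ ds, ∑ dt, pS ds * pT dt * SKL (P ds dt) (P' ds dt)

lemma gibbs_denom_pos {W : Type*} [Fintype W] [Nonempty W] (π : W → ℝ) (hπ : ∀ w, 0 < π w)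
    (γ : ℝ) (f : W → ℝ) : 0 < ∑ w', π w' * Real.exp (-γ * f w') :=
  Finset.sum_pos (fun w' _ => mul_pos (hπ w') (Real.exp_pos _)) Finset.univ_nonempty

lemma gibbs_pos {W : Type*} [Fintype W] [Nonempty W] (π : W → ℝ) (hπ : ∀ w, 0 < π w)
    (γ : ℝ) (f : W → ℝ) (w : W) : 0 < gibbs π γ f w :=
  div_pos (mul_pos (hπ w) (Real.exp_pos _)) (gibbs_denom_pos π hπ γ f)

lemma gibbs_sum {W : Type*} [Fintype W] [Nonempty W] (π : W → ℝ) (hπ : ∀ w, 0 < π w)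
    (γ : ℝ) (f : W → ℝ) : ∑ w, gibbs π γ f w = 1 := by
  unfold gibbs
  rw [← Finset.sum_div, div_self (gibbs_denom_pos π hπ γ f).ne']

lemma log_gibbs {W : Type*} [Fintype W] [Nonempty W] (π : W → ℝ) (hπ : ∀ w, 0 < π w)
    (γ : ℝ) (f : W → ℝ) (w : W) :
    Real.log (gibbs π γ f w) =
      Real.log (π w) + (-γ * f w) - Real.log (∑ w', π w' * Real.exp (-γ * f w')) := by
  unfold gibbs
  rw [Real.log_div (mul_pos (hπ w) (Real.exp_pos _)).ne' (gibbs_denom_pos π hπ γ f).ne',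
    Real.log_mul (hπ w).ne' (Real.exp_pos _).ne', Real.log_exp]

lemma skl_gibbs {W : Type*} [Fintype W] [Nonempty W] (π : W → ℝ) (hπ : ∀ w, 0 < π w)
    (γ : ℝ) (f g : W → ℝ) :
    SKL (gibbs π γ f) (gibbs π γ g) =
      γ * ∑ w, (gibbs π γ f w - gibbs π γ g w) * (g w - f w) := by
  set p := gibbs π γ f with hp
  set q := gibbs π γ g with hq
  have hppos : ∀ w, 0 < p w := gibbs_pos π hπ γ f
  have hqpos : ∀ w, 0 < q w := gibbs_pos π hπ γ g
  set C := Real.log (∑ w', π w' * Real.exp (-γ * g w'))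
    - Real.log (∑ w', π w' * Real.exp (-γ * f w')) with hC
  have hlog : ∀ w, Real.log (p w / q w) = γ * (g w - f w) + C := by
    intro w
    rw [Real.log_div (hppos w).ne' (hqpos w).ne', hp, hq, log_gibbs π hπ γ f w,
      log_gibbs π hπ γ g w, hC]
    ring
  have hlog' : ∀ w, Real.log (q w / p w) = -(γ * (g w - f w) + C) := by
    intro w
    rw [Real.log_div (hqpos w).ne' (hppos w).ne', ← hlog w,
      Real.log_div (hppos w).ne' (hqpos w).ne']
    ring
  unfold SKL KL
  rw [← Finset.sum_add_distrib]
  have : ∀ w ∈ Finset.univ, p w * Real.log (p w / q w) + q w * Real.log (q w / p w)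
      = γ * ((p w - q w) * (g w - f w)) + C * (p w - q w) := by
    intro w _
    rw [hlog w, hlog' w]; ring
  rw [Finset.sum_congr rfl this, Finset.sum_add_distrib, ← Finset.mul_sum, ← Finset.mul_sum,
    Finset.sum_sub_distrib, hp, hq, gibbs_sum π hπ γ f, gibbs_sum π hπ γ g]
  ring

theorem alpha_weighted_gibbs_gen_eq_skl_divergence
    {W Z : Type*} [Fintype W] [Fintype Z] {n m : ℕ}
    (ℓ : W → Z → ℝ) (hℓ : ∀ w z, 0 ≤ ℓ w z)
    (pS : (Fin n → Z) → ℝ) (hpS : IsPMF pS)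
    (pT : (Fin m → Z) → ℝ) (hpT : IsPMF pT)
    (π : W → ℝ) (hπpos : ∀ w, 0 < π w) (hπ : IsPMF π)
    (α γ : ℝ) (hα0 : 0 < α) (hα1 : α < 1) (hγ : 0 < γ) :
    gen ℓ pS pT (fun ds dt => gibbs π γ (wEmpRisk ℓ α ds dt)) =
      condSKLdiv pS pT (fun ds dt => gibbs π γ (wEmpRisk ℓ α ds dt))
        (fun ds _dt => gibbs π γ (mixRisk ℓ α ds pT)) / (γ * α) := by
  have hγα : γ * α ≠ 0 := (mul_pos hγ hα0).ne'
  rw [eq_div_iff hγα]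
  rcases isEmpty_or_nonempty W with hW | hW
  · simp [gen, condSKLdiv, SKL, KL]
  · -- main case
    set P := fun ds dt => gibbs π γ (wEmpRisk ℓ α ds dt) with hP
    set Q := fun ds => gibbs π γ (mixRisk ℓ α ds pT) with hQ
    have hskl : ∀ ds dt, SKL (P ds dt) (Q ds) =
        γ * α * ∑ w, (P ds dt w - Q ds w) * (popRisk ℓ pT w - empRisk ℓ dt w) := by
      intro ds dt
      rw [hP, hQ, skl_gibbs π hπpos γ, Finset.mul_sum, Finset.mul_sum]
      refine Finset.sum_congr rfl fun w _ => ?_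
      have : mixRisk ℓ α ds pT w - wEmpRisk ℓ α ds dt w
          = α * (popRisk ℓ pT w - empRisk ℓ dt w) := by
        simp only [mixRisk, wEmpRisk]; ring
      rw [this]; ring
    have hzero : ∀ ds, ∑ dt, ∑ w, pS ds * pT dt * Q ds w *
        (popRisk ℓ pT w - empRisk ℓ dt w) = 0 := by
      intro ds
      rw [Finset.sum_comm]
      refine Finset.sum_eq_zero fun w _ => ?_
      have h1 : ∑ dt, pT dt * (popRisk ℓ pT w - empRisk ℓ dt w) = 0 := by
        simp only [mul_sub]
        rw [Finset.sum_sub_distrib, ← Finset.sum_mul, hpT.2, one_mul, popRisk]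
        ring
      calc ∑ dt, pS ds * pT dt * Q ds w * (popRisk ℓ pT w - empRisk ℓ dt w)
          = pS ds * Q ds w * ∑ dt, pT dt * (popRisk ℓ pT w - empRisk ℓ dt w) := by
            rw [Finset.mul_sum]
            exact Finset.sum_congr rfl fun dt _ => by ring
        _ = 0 := by rw [h1, mul_zero]
    unfold condSKLdiv
    simp only [hskl]
    unfold gen
    rw [Finset.sum_mul]
    refine Finset.sum_congr rfl fun ds _ => ?_
    rw [Finset.sum_mul]
    have expand : ∀ dt, pS ds * pT dt *
        (γ * α * ∑ w, (P ds dt w - Q ds w) * (popRisk ℓ pT w - empRisk ℓ dt w))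
        = (∑ w, pS ds * pT dt * P ds dt w * (popRisk ℓ pT w - empRisk ℓ dt w)) * (γ * α)
          - γ * α * ∑ w, pS ds * pT dt * Q ds w * (popRisk ℓ pT w - empRisk ℓ dt w) := by
      intro dt
      rw [Finset.mul_sum, Finset.mul_sum, Finset.sum_mul, Finset.mul_sum,
        ← Finset.sum_sub_distrib]
      exact Finset.sum_congr rfl fun w _ => by ring
    rw [show (∑ x, pS ds * pT x * SKL (P ds x) (gibbs π γ (mixRisk ℓ α ds pT))) =
        ∑ dt, pS ds * pT dt * (γ * α * ∑ w, (P ds dt w - Q ds w) *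
          (popRisk ℓ pT w - empRisk ℓ dt w)) from
      Finset.sum_congr rfl fun dt _ => congrArg _ (hskl ds dt)]
    rw [Finset.sum_congr rfl fun dt _ => expand dt, Finset.sum_sub_distrib,
      ← Finset.mul_sum, hzero ds, mul_zero, sub_zero]


end TransferGibbs
end
end
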